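/- For all positive real numbers a and b and any function λ: ℝ≥0 → ℝ≥0 that is continuous, strictly increasing, unbounded, and satisfies λ(0)=0 (i.e., a K∞ function), one has a + b ≤ max((id + λ)(a), (id + λ⁻¹)(b)), where λ⁻¹ denotes the inverse function of λ. -/

import Mathlib

/-- A class K∞ function: continuous, strictly increasing, vanishing at 0, and unbounded. -/
def IsKInf (f : NNReal → NNReal) : Prop :=
  Continuous f ∧ StrictMono f ∧ f 0 = 0 ∧ Filter.Tendsto f Filter.atTop Filter.atTop

theorem stmt0 (a b : NNReal) (ha : 0 < a) (hb : 0 < b)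
    (lam lamInv : NNReal → NNReal) (hlam : IsKInf lam)
    (hinv1 : ∀ s, lamInv (lam s) = s) (hinv2 : ∀ s, lam (lamInv s) = s) :
    a + b ≤ max (a + lam a) (b + lamInv b) := by
  rcases le_total b (lam a) with h | h
  · exact le_max_of_le_left (add_le_add_right h a)
  · refine le_max_of_le_right ?_
    rw [add_comm]
    have : a ≤ lamInv b := by
      have h2 : lam (lamInv (lam a)) ≤ lam (lamInv b) := by rw [hinv2 (lam a), hinv2 b]; exact h
      have := hlam.2.1.le_iff_le.mp h2
      rwa [hinv1] at this
    exact add_le_add_right this b
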